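/- Let ψ_k(ν) = P_ν(λ_k), k ∈ {1,…,q+1}, ν ∈ [0,q]_Z, be the eigenfunctions of the discrete Sturm–Liouville problem, where λ_{q+1} < ⋯ < λ_1 are the zeros of P̃_{q+1} = P_{q+1} − η P_q. Then for every k ∈ {1,…,q+1} we have S^−(ψ_k) = S^+(ψ_k) = N(ψ_k) = k − 1. -/

import Mathlib

namespace DiscPaper

/-- `ν` is a zero (of the first or second type) of the discrete function `f` on `[0,q]_ℤ`. -/
def IsZero (q : ℕ) (f : ℕ → ℝ) (ν : ℕ) : Prop :=
  (ν ≤ q ∧ f ν = 0) ∨ (1 ≤ ν ∧ ν ≤ q ∧ f (ν - 1) * f ν < 0)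

/-- `N q f` is the number of zeros (of both types) of `f` on `[0,q]_ℤ`. -/
noncomputable def N (q : ℕ) (f : ℕ → ℝ) : ℕ := {ν : ℕ | IsZero q f ν}.ncard

/-- `N₀ q f` is the number of zeros of the first type of `f` on `[0,q]_ℤ`. -/
noncomputable def N0 (q : ℕ) (f : ℕ → ℝ) : ℕ := {ν : ℕ | ν ≤ q ∧ f ν = 0}.ncard

/-- Number of sign changes of `g` on `[0,q]_ℤ`. -/
noncomputable def signChanges (q : ℕ) (g : ℕ → ℝ) : ℕ :=
  {ν : ℕ | 1 ≤ ν ∧ ν ≤ q ∧ g (ν - 1) * g ν < 0}.ncard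

/-- `g` is obtained from `f` by replacing all its zero values on `[0,q]_ℤ` by
arbitrary nonzero values. -/
def Admissible (q : ℕ) (f g : ℕ → ℝ) : Prop :=
  (∀ ν ≤ q, g ν ≠ 0) ∧ ∀ ν ≤ q, f ν ≠ 0 → g ν = f ν

/-- `S⁻(f)`: least number of sign changes over all admissible replacements. -/
noncomputable def Sminus (q : ℕ) (f : ℕ → ℝ) : ℕ :=
  sInf {s | ∃ g, Admissible q f g ∧ signChanges q g = s}

/-- `S⁺(f)`: largest number of sign changes over all admissible replacements. -/
noncomputable def Splus (q : ℕ) (f : ℕ → ℝ) : ℕ :=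
  sSup {s | ∃ g, Admissible q f g ∧ signChanges q g = s}
open Polynomial in
/-- STATEMENT SETUP: the polynomials `P_l` generated by the three-term recurrence
`γ_{l-1} P_{l-1} + α_l P_l + β_l P_{l+1} = λ ρ_l P_l` with `P_{-1} = 0`, `P_0 = 1`. -/
structure Recurrence (α β γ ρ : ℕ → ℝ) (P : ℕ → Polynomial ℝ) : Prop where
  hβ : ∀ l, 0 < β l
  hγ : ∀ l, 0 < γ l
  hρ : ∀ l, 0 < ρ l
  hP0 : P 0 = 1
  hrec0 : C (α 0) * P 0 + C (β 0) * P 1 = X * (C (ρ 0) * P 0)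
  hrec : ∀ l : ℕ,
    C (γ l) * P l + C (α (l + 1)) * P (l + 1) + C (β (l + 1)) * P (l + 2) =
      X * (C (ρ (l + 1)) * P (l + 1))

/-- STATEMENT SETUP: `Λ (k-1)` is the `k`-th zero `λ_k` of
`P̃_{q+1} = P_{q+1} - η P_q`, ordered decreasingly: `λ_{q+1} < ⋯ < λ_1`. -/
structure SLZeros (P : ℕ → Polynomial ℝ) (q : ℕ) (η : ℝ) (Λ : ℕ → ℝ) : Prop where
  anti : StrictAntiOn Λ (Set.Iic q)
  root : ∀ i ≤ q, (P (q + 1) - Polynomial.C η * P q).eval (Λ i) = 0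



section Development
open Polynomial Finset Filter

/-- sign of a product of nonzero reals -/
lemma prod_pos_iff_even {n : ℕ} {f : ℕ → ℝ} (hf : ∀ i < n, f i ≠ 0) :
    (0 < ∏ i ∈ Finset.range n, f i) ↔
      Even (((Finset.range n).filter (fun i => f i < 0)).card) := by
  induction n with
  | zero => simp
  | succ n ih =>
    rw [Finset.prod_range_succ, Finset.range_add_one, Finset.filter_insert]
    have hfn := hf n (Nat.lt_succ_self n)
    have hprod : (∏ i ∈ Finset.range n, f i) ≠ 0 :=
      Finset.prod_ne_zero_iff.2 (fun i hi => hf i ((Finset.mem_range.1 hi).trans (Nat.lt_succ_self n)))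
    have ih' := ih (fun i hi => hf i (hi.trans (Nat.lt_succ_self n)))
    by_cases h : f n < 0
    · rw [if_pos h, Finset.card_insert_of_notMem (by simp)]
      constructor
      · intro hp
        have : ¬ (0 < ∏ i ∈ Finset.range n, f i) := by
          intro hpos; nlinarith
        rw [ih'] at this
        rw [Nat.even_add_one]
        simpa using this
      · intro he
        rw [Nat.even_add_one] at he
        have : ¬ (0 < ∏ i ∈ Finset.range n, f i) := fun hpos => he (ih'.1 hpos)
        have hneg : (∏ i ∈ Finset.range n, f i) < 0 := lt_of_le_of_ne (not_lt.1 this) hprod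
        nlinarith
    · rw [if_neg h]
      have hpos : 0 < f n := lt_of_le_of_ne (not_lt.1 h) (Ne.symm hfn)
      rw [← ih']
      constructor
      · intro hp; nlinarith
      · intro hp; nlinarith

/-- a downward-closed finset of naturals is an initial segment -/
lemma mem_iff_lt_card_of_dc (S : Finset ℕ) (hdc : ∀ i j : ℕ, i ≤ j → j ∈ S → i ∈ S) :
    ∀ i, i ∈ S ↔ i < S.card := by
  intro i
  constructor
  · intro hi
    have hsub : Finset.range (i+1) ⊆ S := fun j hj =>
      hdc j i (Nat.lt_succ_iff.1 (Finset.mem_range.1 hj)) hi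
    have := Finset.card_le_card hsub
    simpa using this
  · intro hi
    by_contra hne
    have hsub : S ⊆ Finset.range i := by
      intro j hj
      rw [Finset.mem_range]
      by_contra hji
      exact hne (hdc i j (not_lt.1 hji) hj)
    have := Finset.card_le_card hsub
    simp only [Finset.card_range] at this
    omega

/-- chain decreasing -/
lemma dec_of_succ {v : ℕ → ℝ} {n : ℕ} (h : ∀ i, i + 1 < n → v (i+1) < v i) :
    ∀ i j, i < j → j < n → v j < v i := by
  intro i j hij hjn
  induction j with
  | zero => omega
  | succ j ih =>
    rcases Nat.lt_succ_iff_lt_or_eq.1 hij with h' | h'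
    · exact (h j hjn).trans (ih h' (by omega))
    · subst h'; exact h i hjn

/-- IVT for polynomials -/
lemma poly_ivt {p : ℝ[X]} {a b : ℝ} (hab : a < b) (h : p.eval a * p.eval b < 0) :
    ∃ x, a < x ∧ x < b ∧ p.eval x = 0 := by
  have hc : ContinuousOn (fun x => p.eval x) (Set.Icc a b) := (p.continuous_aeval).continuousOn
  rcases mul_neg_iff.1 h with ⟨ha, hb⟩ | ⟨ha, hb⟩
  · have := intermediate_value_Ioo' hab.le hc
    have h0 : (0:ℝ) ∈ Set.Ioo (p.eval b) (p.eval a) := ⟨hb, ha⟩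
    rcases this h0 with ⟨x, hx, hx0⟩
    exact ⟨x, hx.1, hx.2, hx0⟩
  · have := intermediate_value_Ioo hab.le hc
    have h0 : (0:ℝ) ∈ Set.Ioo (p.eval a) (p.eval b) := ⟨ha, hb⟩
    rcases this h0 with ⟨x, hx, hx0⟩
    exact ⟨x, hx.1, hx.2, hx0⟩



/-- `p` has positive leading coefficient and exactly the `n` distinct real roots
`t 0 > t 1 > ⋯ > t (n-1)`. -/
def Fac (p : ℝ[X]) (n : ℕ) (t : ℕ → ℝ) : Prop :=
  (∀ ⦃i j : ℕ⦄, i < j → j < n → t j < t i) ∧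
    ∃ c : ℝ, 0 < c ∧ p = C c * ∏ i ∈ Finset.range n, (X - C (t i))

lemma Fac.eval_eq {p : ℝ[X]} {n : ℕ} {t : ℕ → ℝ} (h : Fac p n t) (x : ℝ) :
    ∃ c : ℝ, 0 < c ∧ p.eval x = c * ∏ i ∈ Finset.range n, (x - t i) := by
  obtain ⟨-, c, hc, hp⟩ := h
  exact ⟨c, hc, by simp [hp, eval_prod]⟩

lemma Fac.eval_root {p : ℝ[X]} {n : ℕ} {t : ℕ → ℝ} (h : Fac p n t) {i : ℕ} (hi : i < n) :
    p.eval (t i) = 0 := by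
  obtain ⟨c, hc, hev⟩ := h.eval_eq (t i)
  rw [hev, Finset.prod_eq_zero (Finset.mem_range.2 hi) (by ring)]
  ring

lemma Fac.eval_ne_zero {p : ℝ[X]} {n : ℕ} {t : ℕ → ℝ} (h : Fac p n t) {x : ℝ}
    (hx : ∀ i < n, x ≠ t i) : p.eval x ≠ 0 := by
  obtain ⟨c, hc, hev⟩ := h.eval_eq x
  rw [hev]
  exact mul_ne_zero hc.ne' (Finset.prod_ne_zero_iff.2 fun i hi =>
    sub_ne_zero.2 (hx i (Finset.mem_range.1 hi)))

lemma Fac.eval_pos_iff {p : ℝ[X]} {n : ℕ} {t : ℕ → ℝ} (h : Fac p n t) {x : ℝ}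
    (hx : ∀ i < n, x ≠ t i) :
    (0 < p.eval x ↔ Even (((Finset.range n).filter (fun i => x < t i)).card)) := by
  obtain ⟨c, hc, hev⟩ := h.eval_eq x
  have hne : ∀ i < n, x - t i ≠ 0 := fun i hi => sub_ne_zero.2 (hx i hi)
  have := prod_pos_iff_even hne
  have hfe : (Finset.range n).filter (fun i => x - t i < 0) =
      (Finset.range n).filter (fun i => x < t i) := by
    apply Finset.filter_congr; intro i _; simp [sub_neg]
  rw [hfe] at this
  rw [hev, ← this]
  constructor
  · intro hp
    nlinarith [(mul_pos_iff.1 hp)]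
  · intro hp
    exact mul_pos hc hp


lemma monic_prod_X_sub (n : ℕ) (t : ℕ → ℝ) :
    (∏ i ∈ Finset.range n, (X - C (t i)) : ℝ[X]).Monic :=
  monic_prod_of_monic _ _ (fun i _ => monic_X_sub_C (t i))

lemma natDegree_prod_X_sub (n : ℕ) (t : ℕ → ℝ) :
    (∏ i ∈ Finset.range n, (X - C (t i)) : ℝ[X]).natDegree = n := by
  rw [natDegree_prod _ _ (fun i _ => X_sub_C_ne_zero (t i))]
  simp [natDegree_X_sub_C]

lemma Fac.natDegree_eq {p : ℝ[X]} {n : ℕ} {t : ℕ → ℝ} (h : Fac p n t) : p.natDegree = n := by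
  obtain ⟨-, c, hc, hp⟩ := h
  rw [hp, natDegree_mul (by simpa using hc.ne') (monic_prod_X_sub n t).ne_zero]
  simp [natDegree_prod_X_sub]

lemma Fac.leadingCoeff_pos {p : ℝ[X]} {n : ℕ} {t : ℕ → ℝ} (h : Fac p n t) :
    0 < p.leadingCoeff := by
  obtain ⟨-, c, hc, hp⟩ := h
  rw [hp, leadingCoeff_mul, (monic_prod_X_sub n t).leadingCoeff, leadingCoeff_C]
  simpa using hc

lemma Fac.ne_zero {p : ℝ[X]} {n : ℕ} {t : ℕ → ℝ} (h : Fac p n t) : p ≠ 0 :=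
  fun h0 => by simpa [h0] using h.leadingCoeff_pos

/-- A polynomial of degree `n` with positive leading coefficient and `n` distinct
roots factors completely. -/
lemma fac_of_roots {p : ℝ[X]} {n : ℕ} {t : ℕ → ℝ}
    (hdeg : p.natDegree = n) (hlc : 0 < p.leadingCoeff)
    (hdec : ∀ ⦃i j : ℕ⦄, i < j → j < n → t j < t i)
    (hroots : ∀ i < n, p.eval (t i) = 0) : Fac p n t := by
  refine ⟨hdec, p.leadingCoeff, hlc, ?_⟩
  set q : ℝ[X] := C p.leadingCoeff * ∏ i ∈ Finset.range n, (X - C (t i)) with hq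
  have hqfac : Fac q n t := ⟨hdec, p.leadingCoeff, hlc, rfl⟩
  have hqd : q.natDegree = n := hqfac.natDegree_eq
  have hinj : Set.InjOn t (Finset.range n : Set ℕ) := by
    intro i hi j hj hij
    simp only [Finset.coe_range, Set.mem_Iio] at hi hj
    by_contra hne
    rcases lt_trichotomy i j with h | h | h
    · exact (hdec h hj).ne hij.symm
    · exact hne h
    · exact (hdec h hi).ne' hij.symm
  have hsub : p - q = 0 := by
    by_contra hne
    have hdlt : (p - q).natDegree < n := by
      have hle : (p - q).natDegree ≤ n := by
        refine le_trans (natDegree_sub_le p q) (by simp [hdeg, hqd])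
      rcases lt_or_eq_of_le hle with h | h
      · exact h
      · exfalso
        have hcoeff : (p - q).coeff n = 0 := by
          have hpc : p.coeff n = p.leadingCoeff := by rw [← hdeg]; rfl
          have hqc : q.coeff n = p.leadingCoeff := by
            have h2 : q.leadingCoeff = p.leadingCoeff := by
              rw [hq, leadingCoeff_mul, (monic_prod_X_sub n t).leadingCoeff, leadingCoeff_C,
                mul_one]
            calc q.coeff n = q.coeff q.natDegree := by rw [hqd]
              _ = q.leadingCoeff := rfl
              _ = p.leadingCoeff := h2
          simp [coeff_sub, hpc, hqc]
        have : (p - q).leadingCoeff = 0 := by rw [← h] at hcoeff; exact hcoeff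
        exact (leadingCoeff_ne_zero.2 hne) this
    have hcard : (p - q).natDegree < ((Finset.range n).image t).card := by
      rwa [Finset.card_image_of_injOn hinj, Finset.card_range]
    have := Polynomial.eq_zero_of_natDegree_lt_card_of_eval_eq_zero' (p - q)
      ((Finset.range n).image t) ?_ hcard
    · exact hne this
    · intro x hx
      rcases Finset.mem_image.1 hx with ⟨i, hi, rfl⟩
      have h1 := hroots i (Finset.mem_range.1 hi)
      have h2 : q.eval (t i) = 0 := by
        rw [hq, eval_mul, eval_prod, Finset.prod_eq_zero hi (by simp)]
        ring
      simp [eval_sub, h1, h2]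
  have := sub_eq_zero.1 hsub
  rw [this]


/-- evaluated recurrence -/
lemma rec_eval (hP : Recurrence α β γ ρ P) (l : ℕ) (x : ℝ) :
    γ l * (P l).eval x + α (l+1) * (P (l+1)).eval x + β (l+1) * (P (l+2)).eval x =
      x * (ρ (l+1) * (P (l+1)).eval x) := by
  have := congrArg (Polynomial.eval x) (hP.hrec l)
  simpa using this

lemma fac_P0 (hP : Recurrence α β γ ρ P) : Fac (P 0) 0 (fun _ => 0) := by
  refine ⟨by omega, 1, one_pos, ?_⟩
  simp [hP.hP0]

lemma P1_eq (hP : Recurrence α β γ ρ P) :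
    P 1 = C (ρ 0 / β 0) * (X - C (α 0 / ρ 0)) := by
  have hβ0 := (hP.hβ 0).ne'
  have hρ0 := (hP.hρ 0).ne'
  have h := hP.hrec0
  rw [hP.hP0] at h
  have h2 : C (β 0) * P 1 = C (ρ 0) * X - C (α 0) := by
    rw [mul_one, mul_one] at h
    linear_combination h
  have h3 : C (β 0) * (C (ρ 0 / β 0) * (X - C (α 0 / ρ 0))) = C (ρ 0) * X - C (α 0) := by
    have e1 : β 0 * (ρ 0 / β 0) = ρ 0 := by field_simp
    have e2 : β 0 * (ρ 0 / β 0) * (α 0 / ρ 0) = α 0 := by field_simp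
    calc C (β 0) * (C (ρ 0 / β 0) * (X - C (α 0 / ρ 0)))
        = C (β 0 * (ρ 0 / β 0)) * X - C (β 0 * (ρ 0 / β 0) * (α 0 / ρ 0)) := by
          simp only [C_mul]; ring
      _ = C (ρ 0) * X - C (α 0) := by
          rw [e1]
          have e2' : ρ 0 * (α 0 / ρ 0) = α 0 := by field_simp
          rw [e2']
  have := h2.trans h3.symm
  exact mul_left_cancel₀ (C_ne_zero.2 hβ0) this

lemma fac_P1 (hP : Recurrence α β γ ρ P) : Fac (P 1) 1 (fun _ => α 0 / ρ 0) := by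
  refine ⟨by omega, ρ 0 / β 0, div_pos (hP.hρ 0) (hP.hβ 0), ?_⟩
  rw [P1_eq hP]
  simp

/-- `P (l+2)` in terms of the previous two. -/
lemma P_succ_succ (hP : Recurrence α β γ ρ P) (l : ℕ) :
    C (β (l+1)) * P (l+2) =
      X * (C (ρ (l+1)) * P (l+1)) - C (γ l) * P l - C (α (l+1)) * P (l+1) := by
  linear_combination hP.hrec l

/-- natDegree and positive leading coefficient of `P (l+2)` given those of the
previous two. -/
lemma deg_lead_step (hP : Recurrence α β γ ρ P) (l : ℕ)
    (h1 : (P l).natDegree = l)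
    (h2 : (P (l+1)).natDegree = l+1) (hlc2 : 0 < (P (l+1)).leadingCoeff) :
    (P (l+2)).natDegree = l+2 ∧ 0 < (P (l+2)).leadingCoeff := by
  have hβ := hP.hβ (l+1)
  have hρ := hP.hρ (l+1)
  have hne1 : P (l+1) ≠ 0 := leadingCoeff_ne_zero.1 hlc2.ne'
  set A : ℝ[X] := X * (C (ρ (l+1)) * P (l+1)) with hA
  set B : ℝ[X] := C (γ l) * P l + C (α (l+1)) * P (l+1) with hB
  have hQ : C (β (l+1)) * P (l+2) = A - B := by
    rw [hA, hB, P_succ_succ hP l]; ring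
  have hAd : A.natDegree = l + 2 := by
    rw [hA, natDegree_mul X_ne_zero (mul_ne_zero (C_ne_zero.2 hρ.ne') hne1),
      natDegree_mul (C_ne_zero.2 hρ.ne') hne1]
    simp [h2]; ring
  have hAlc : A.leadingCoeff = ρ (l+1) * (P (l+1)).leadingCoeff := by
    rw [hA, leadingCoeff_mul, leadingCoeff_mul]
    simp
  have hBd : B.natDegree < l + 2 := by
    rw [hB]
    calc (C (γ l) * P l + C (α (l+1)) * P (l+1)).natDegree
        ≤ max (C (γ l) * P l).natDegree (C (α (l+1)) * P (l+1)).natDegree :=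
          natDegree_add_le _ _
      _ < l + 2 := by
          apply max_lt
          · exact lt_of_le_of_lt (natDegree_C_mul_le _ _) (by omega)
          · exact lt_of_le_of_lt (natDegree_C_mul_le _ _) (by omega)
  have hQd : (A - B).natDegree = l + 2 := by
    rw [← hAd]
    exact natDegree_sub_eq_left_of_natDegree_lt (by omega)
  have hQlc : (A - B).leadingCoeff = ρ (l+1) * (P (l+1)).leadingCoeff := by
    rw [← hAlc]
    have : (A - B).coeff (l+2) = A.coeff (l+2) := by
      rw [coeff_sub, coeff_eq_zero_of_natDegree_lt hBd, sub_zero]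
    calc (A - B).leadingCoeff = (A - B).coeff (l+2) := by rw [leadingCoeff, hQd]
      _ = A.coeff (l+2) := this
      _ = A.leadingCoeff := by rw [leadingCoeff, hAd]
  have hne2 : P (l+2) ≠ 0 := by
    intro h0
    rw [h0, mul_zero] at hQ
    have hAB : A = B := sub_eq_zero.1 hQ.symm
    rw [hAB] at hAd
    omega
  have hd : (P (l+2)).natDegree = l + 2 := by
    have := congrArg natDegree hQ
    rwa [natDegree_mul (C_ne_zero.2 hβ.ne') hne2, natDegree_C, zero_add, hQd] at this
  refine ⟨hd, ?_⟩
  have hlcQ : β (l+1) * (P (l+2)).leadingCoeff = ρ (l+1) * (P (l+1)).leadingCoeff := by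
    have := congrArg leadingCoeff hQ
    rwa [leadingCoeff_mul, leadingCoeff_C, hQlc] at this
  nlinarith


/-- somewhere above any `a`, a polynomial with positive leading coeff is positive -/
lemma exists_gt_pos (p : ℝ[X]) (hdeg : 0 < p.natDegree) (hlc : 0 < p.leadingCoeff) (a : ℝ) :
    ∃ x, a < x ∧ 0 < p.eval x := by
  have h := p.tendsto_atTop_of_leadingCoeff_nonneg (natDegree_pos_iff_degree_pos.1 hdeg) hlc.le
  have := (h.eventually_gt_atTop 0).and (eventually_gt_atTop a)
  rcases this.exists with ⟨x, hx1, hx2⟩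
  exact ⟨x, hx2, hx1⟩

/-- somewhere below any `a`, a polynomial has the sign of `(-1)^natDegree * leadingCoeff` -/
lemma exists_lt_sign (p : ℝ[X]) (hdeg : 0 < p.natDegree) (hlc : 0 < p.leadingCoeff) (a : ℝ) :
    ∃ x, x < a ∧ (if Even p.natDegree then 0 < p.eval x else p.eval x < 0) := by
  set q : ℝ[X] := p.comp (-X) with hq
  have hXd : (-X : ℝ[X]).natDegree = 1 := by simp
  have hqd : q.natDegree = p.natDegree := by
    rw [hq, natDegree_comp, hXd, mul_one]
  have hqlc : q.leadingCoeff = p.leadingCoeff * (-1) ^ p.natDegree := by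
    rw [hq, leadingCoeff_comp (by rw [hXd]; omega)]
    simp
  have hqev : ∀ x : ℝ, q.eval x = p.eval (-x) := by
    intro x; rw [hq, eval_comp]; simp
  by_cases hev : Even p.natDegree
  · have hpos : 0 < q.leadingCoeff := by
      rw [hqlc, hev.neg_one_pow, mul_one]; exact hlc
    obtain ⟨y, hy1, hy2⟩ := exists_gt_pos q (by omega) hpos (-a)
    refine ⟨-y, by linarith, ?_⟩
    rw [if_pos hev]
    rw [hqev] at hy2
    simpa using hy2
  · have hneg : q.leadingCoeff < 0 := by
      rw [hqlc, Odd.neg_one_pow (Nat.not_even_iff_odd.1 hev), mul_neg_one]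
      linarith
    have h := q.tendsto_atBot_of_leadingCoeff_nonpos
      (natDegree_pos_iff_degree_pos.1 (by omega)) hneg.le
    have := (h.eventually_lt_atBot 0).and (eventually_gt_atTop (-a))
    rcases this.exists with ⟨y, hy1, hy2⟩
    refine ⟨-y, by linarith, ?_⟩
    rw [if_neg hev]
    rw [hqev] at hy1
    simpa using hy1

lemma neg_of_iff {a : ℝ} {p : Prop} (h1 : 0 < a ↔ p) (h2 : a ≠ 0) (h3 : ¬ p) : a < 0 := by
  rcases lt_trichotomy a 0 with h | h | h
  · exact h
  · exact absurd h h2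
  · exact absurd (h1.1 h) h3

lemma opp_signs_mul_neg {a b : ℝ} {p : Prop} [Decidable p]
    (ha1 : 0 < a ↔ p) (ha2 : a ≠ 0) (hb1 : 0 < b ↔ ¬ p) (hb2 : b ≠ 0) : a * b < 0 := by
  by_cases hp : p
  · have := ha1.2 hp
    have := neg_of_iff hb1 hb2 (by simpa using hp)
    nlinarith
  · have := hb1.2 hp
    have := neg_of_iff ha1 ha2 hp
    nlinarith




/-- The inductive interlacing step. -/
lemma interl_step (hP : Recurrence α β γ ρ P) (l : ℕ) {r s : ℕ → ℝ}
    (hr : Fac (P l) l r) (hs : Fac (P (l+1)) (l+1) s)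
    (hint : ∀ i < l, r i < s i ∧ s (i+1) < r i) :
    ∃ t : ℕ → ℝ, Fac (P (l+2)) (l+2) t ∧ ∀ i < l+1, s i < t i ∧ t (i+1) < s i := by
  obtain ⟨hdeg2, hlc2⟩ := deg_lead_step hP l hr.natDegree_eq hs.natDegree_eq hs.leadingCoeff_pos
  -- position of roots of P l relative to roots of P (l+1)
  have hcount : ∀ i < l+1, ∀ j < l, (j < i → s i < r j) ∧ (i ≤ j → r j < s i) := by
    intro i hi j hj
    constructor
    · intro hji
      have h1 : s (j+1) < r j := (hint j hj).2
      rcases eq_or_lt_of_le (Nat.succ_le_of_lt hji) with h | h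
      · rw [show i = j + 1 from h.symm]; exact h1
      · exact (hs.1 h hi).trans h1
    · intro hij
      have h1 : r j < s j := (hint j hj).1
      rcases eq_or_lt_of_le hij with h | h
      · rw [← h] at h1 ⊢; exact h1
      · have hil : i < l := lt_trans h hj
        calc r j < r i := hr.1 h hj
          _ < s i := (hint i hil).1
  have hsne : ∀ i < l+1, ∀ j < l, s i ≠ r j := by
    intro i hi j hj
    rcases lt_or_ge j i with h | h
    · exact ne_of_lt ((hcount i hi j hj).1 h)
    · exact ne_of_gt ((hcount i hi j hj).2 h)
  -- sign of P l at s i : (-1)^i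
  have hPl_sign : ∀ i < l+1, (0 < (P l).eval (s i) ↔ Even i) ∧ (P l).eval (s i) ≠ 0 := by
    intro i hi
    have hne := hr.eval_ne_zero (fun j hj => hsne i hi j hj)
    have hpos := hr.eval_pos_iff (x := s i) (fun j hj => hsne i hi j hj)
    have hfe : (Finset.range l).filter (fun j => s i < r j) = Finset.range (min i l) := by
      apply Finset.ext
      intro j
      simp only [Finset.mem_filter, Finset.mem_range, lt_min_iff]
      constructor
      · rintro ⟨hj, hlt⟩
        refine ⟨?_, hj⟩
        by_contra hji
        exact absurd hlt (not_lt.2 ((hcount i hi j hj).2 (not_lt.1 hji)).le)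
      · rintro ⟨hji, hj⟩
        exact ⟨hj, (hcount i hi j hj).1 hji⟩
    have hmin : min i l = i := min_eq_left (Nat.lt_succ_iff.1 hi)
    rw [hfe, hmin, Finset.card_range] at hpos
    exact ⟨hpos, hne⟩
  -- sign of P (l+2) at s i : (-1)^(i+1)
  have hsign : ∀ i < l+1, (0 < (P (l+2)).eval (s i) ↔ ¬ Even i) ∧ (P (l+2)).eval (s i) ≠ 0 := by
    intro i hi
    have hz : (P (l+1)).eval (s i) = 0 := by
      obtain ⟨-, c, hc, hp⟩ := hs
      rw [hp]
      rw [eval_mul, eval_prod, Finset.prod_eq_zero (Finset.mem_range.2 hi) (by simp)]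
      ring
    have hrec := rec_eval hP l (s i)
    rw [hz] at hrec
    have hβ := hP.hβ (l+1)
    have hγ := hP.hγ l
    have hkey : β (l+1) * (P (l+2)).eval (s i) = - (γ l * (P l).eval (s i)) := by linarith
    obtain ⟨hplpos, hplne⟩ := hPl_sign i hi
    constructor
    · constructor
      · intro h
        intro hev
        have := hplpos.2 hev
        nlinarith
      · intro h
        have hneg : (P l).eval (s i) < 0 := by
          rcases lt_trichotomy ((P l).eval (s i)) 0 with h' | h' | h'
          · exact h'
          · exact absurd h' hplne
          · exact absurd (hplpos.1 h') h
        nlinarith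
    · intro h0
      rw [h0, mul_zero] at hkey
      have : (P l).eval (s i) = 0 := by nlinarith
      exact hplne this
  -- top root
  have hs0neg : (P (l+2)).eval (s 0) < 0 :=
    neg_of_iff (hsign 0 (by omega)).1 (hsign 0 (by omega)).2 (by simp)
  obtain ⟨M, hM1, hM2⟩ := exists_gt_pos (P (l+2)) (by omega) hlc2 (s 0)
  obtain ⟨T, hT1, -, hT3⟩ := poly_ivt hM1 (by nlinarith)
  -- middle roots
  have hmid : ∀ j, j < l → ∃ x, s (j+1) < x ∧ x < s j ∧ (P (l+2)).eval x = 0 := by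
    intro j hj
    have h1 := hsign j (by omega)
    have h2 := hsign (j+1) (by omega)
    have hlt : s (j+1) < s j := hs.1 (Nat.lt_succ_self j) (by omega)
    apply poly_ivt hlt
    have hpar : (¬ Even (j+1)) ↔ Even j := by simp [Nat.even_add_one]
    exact opp_signs_mul_neg (p := Even j) (h2.1.trans hpar) h2.2
      (h1.1.trans (by tauto)) h1.2
  -- bottom root
  have hbot : ∃ x, x < s l ∧ (P (l+2)).eval x = 0 := by
    obtain ⟨x, hx1, hx2⟩ := exists_lt_sign (P (l+2)) (by omega) hlc2 (s l)
    rw [hdeg2] at hx2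
    have hsl := hsign l (by omega)
    have hprod : (P (l+2)).eval x * (P (l+2)).eval (s l) < 0 := by
      by_cases hev : Even l
      · rw [if_pos (by simpa [Nat.even_add] using hev)] at hx2
        have := neg_of_iff hsl.1 hsl.2 (by simpa using hev)
        nlinarith
      · rw [if_neg (by simpa [Nat.even_add] using hev)] at hx2
        have := hsl.1.2 hev
        nlinarith
    obtain ⟨B, hB1, hB2, hB3⟩ := poly_ivt hx1 hprod
    exact ⟨B, hB2, hB3⟩
  obtain ⟨B, hBlt, hBroot⟩ := hbot
  -- assemble the root function
  set midf : ℕ → ℝ := fun j => if h : j < l then (hmid j h).choose else 0 with hmidf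
  have hmidf_spec : ∀ j (h : j < l),
      s (j+1) < midf j ∧ midf j < s j ∧ (P (l+2)).eval (midf j) = 0 := by
    intro j h
    have := (hmid j h).choose_spec
    simpa [hmidf, dif_pos h] using this
  set t : ℕ → ℝ := fun i => if i = 0 then T else if i ≤ l then midf (i-1) else B with ht
  have ht0 : t 0 = T := by simp [ht]
  have htmid : ∀ i, 1 ≤ i → i ≤ l → s i < t i ∧ t i < s (i-1) ∧ (P (l+2)).eval (t i) = 0 := by
    intro i h1 h2
    have hti : t i = midf (i-1) := by
      simp only [ht]
      rw [if_neg (by omega), if_pos h2]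
    obtain ⟨ha, hb, hc⟩ := hmidf_spec (i-1) (by omega)
    rw [show i - 1 + 1 = i by omega] at ha
    rw [hti]
    exact ⟨ha, hb, hc⟩
  have htbot : t (l+1) = B := by
    simp only [ht]
    rw [if_neg (by omega), if_neg (by omega)]
  have hinterl : ∀ i < l+1, s i < t i ∧ t (i+1) < s i := by
    intro i hi
    constructor
    · rcases Nat.eq_zero_or_pos i with h | h
      · subst h; rw [ht0]; exact hT1
      · exact (htmid i h (by omega)).1
    · rcases Nat.lt_or_ge (i+1) (l+1) with h | h
      · have := (htmid (i+1) (by omega) (by omega)).2.1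
        simpa using this
      · have : i = l := by omega
        subst this
        rw [htbot]; exact hBlt
  have hroots : ∀ i < l+2, (P (l+2)).eval (t i) = 0 := by
    intro i hi
    rcases Nat.eq_zero_or_pos i with h | h
    · subst h; rw [ht0]; exact hT3
    · rcases Nat.lt_or_ge i (l+1) with h2 | h2
      · exact (htmid i h (by omega)).2.2
      · have : i = l + 1 := by omega
        subst this
        rw [htbot]; exact hBroot
  have hdec : ∀ ⦃i j : ℕ⦄, i < j → j < l+2 → t j < t i := by
    apply dec_of_succ
    intro i hi
    have h := hinterl i (by omega)
    exact h.2.trans h.1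
  exact ⟨t, fac_of_roots hdeg2 hlc2 hdec hroots, hinterl⟩


noncomputable def chain (hP : Recurrence α β γ ρ P) : ∀ l : ℕ,
    {rs : (ℕ → ℝ) × (ℕ → ℝ) //
      Fac (P l) l rs.1 ∧ Fac (P (l+1)) (l+1) rs.2 ∧
        ∀ i < l, rs.1 i < rs.2 i ∧ rs.2 (i+1) < rs.1 i}
  | 0 => ⟨(fun _ => 0, fun _ => α 0 / ρ 0), fac_P0 hP, fac_P1 hP, by omega⟩
  | (l+1) =>
    let prev := chain hP l
    let h := interl_step hP l prev.2.1 prev.2.2.1 prev.2.2.2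
    ⟨(prev.1.2, Classical.choose h), prev.2.2.1, (Classical.choose_spec h).1,
      (Classical.choose_spec h).2⟩

lemma chain_exists (hP : Recurrence α β γ ρ P) :
    ∃ R : ℕ → ℕ → ℝ, ∀ l, Fac (P l) l (R l) ∧
      ∀ i < l, R l i < R (l+1) i ∧ R (l+1) (i+1) < R l i := by
  refine ⟨fun l => (chain hP l).1.1, fun l => ⟨(chain hP l).2.1, ?_⟩⟩
  have hcoh : (chain hP (l+1)).1.1 = (chain hP l).1.2 := by
    rw [chain]
  simp only []
  rw [hcoh]
  exact (chain hP l).2.2.2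



/-- number of entries of `t` (among the first `n`) exceeding `x` -/
noncomputable def cntf (n : ℕ) (t : ℕ → ℝ) (x : ℝ) : ℕ :=
  ((Finset.range n).filter (fun j => x < t j)).card

lemma cntf_le (n : ℕ) (t : ℕ → ℝ) (x : ℝ) : cntf n t x ≤ n := by
  calc cntf n t x ≤ (Finset.range n).card := Finset.card_filter_le _ _
    _ = n := Finset.card_range n

lemma count_lt_iff {n : ℕ} {t : ℕ → ℝ}
    (hdec : ∀ ⦃i j : ℕ⦄, i < j → j < n → t j < t i) (x : ℝ) {i : ℕ} (hi : i < n) :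
    (x < t i ↔ i < cntf n t x) := by
  have hdc : ∀ a b : ℕ, a ≤ b → b ∈ (Finset.range n).filter (fun j => x < t j) →
      a ∈ (Finset.range n).filter (fun j => x < t j) := by
    intro a b hab hb
    rw [Finset.mem_filter, Finset.mem_range] at hb ⊢
    rcases eq_or_lt_of_le hab with h | h
    · exact h ▸ hb
    · exact ⟨h.trans hb.1, hb.2.trans (hdec h hb.1)⟩
  have := mem_iff_lt_card_of_dc _ hdc i
  rw [Finset.mem_filter, Finset.mem_range] at this
  unfold cntf
  constructor
  · intro h; exact this.1 ⟨hi, h⟩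
  · intro h; exact (this.2 h).2

/-- If `x` lies strictly interlaced as `∀ i < n, (i < m → x < t i) ∧ (m ≤ i → t i < x)`
then `cntf n t x = m`. -/
lemma cntf_eq {n m : ℕ} {t : ℕ → ℝ} (hm : m ≤ n)
    (hdec : ∀ ⦃i j : ℕ⦄, i < j → j < n → t j < t i)
    (h : ∀ i < n, (i < m → x < t i) ∧ (m ≤ i → ¬ (x < t i))) : cntf n t x = m := by
  have h1 : m ≤ cntf n t x := by
    rcases Nat.eq_zero_or_pos m with h0 | h0
    · omega
    · have hlt : m - 1 < n := by omega
      have := (count_lt_iff hdec x hlt).1 ((h (m-1) hlt).1 (by omega))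
      omega
  have h2 : cntf n t x ≤ m := by
    by_contra hc
    have hmn : m < n := by
      have := cntf_le n t x; omega
    have h3 := (count_lt_iff hdec x hmn).2 (by omega)
    exact (h m hmn).2 (le_refl m) h3
  omega

/-- Main counting facts for an interlaced pair. -/
lemma pair_facts {l : ℕ} {r s : ℕ → ℝ} {pl ps : ℝ[X]}
    (hr : Fac pl l r) (hs : Fac ps (l+1) s)
    (hint : ∀ i < l, r i < s i ∧ s (i+1) < r i) (x : ℝ) :
    (pl.eval x = 0 → ps.eval x ≠ 0 ∧ cntf (l+1) s x = cntf l r x + 1) ∧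
    (ps.eval x = 0 → pl.eval x ≠ 0 ∧ cntf (l+1) s x = cntf l r x) ∧
    (pl.eval x ≠ 0 → ps.eval x ≠ 0 →
      ((pl.eval x * ps.eval x < 0 → cntf (l+1) s x = cntf l r x + 1) ∧
       (¬ (pl.eval x * ps.eval x < 0) → cntf (l+1) s x = cntf l r x))) := by
  refine ⟨?_, ?_, ?_⟩
  · -- x is a root of pl
    intro hzero
    have hex : ∃ j, j < l ∧ x = r j := by
      by_contra hne
      push_neg at hne
      exact hr.eval_ne_zero (fun j hj => hne j hj) hzero
    obtain ⟨j, hj, rfl⟩ := hex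
    have hmr : cntf l r (r j) = j := by
      apply cntf_eq hj.le hr.1
      intro i hi
      refine ⟨fun h => hr.1 h hj, fun h hc => ?_⟩
      rcases eq_or_lt_of_le h with h' | h'
      · subst h'; exact lt_irrefl _ hc
      · exact absurd hc (not_lt.2 (hr.1 h' hi).le)
    have hsstrict : ∀ i < l+1, (i < j+1 → r j < s i) ∧ (j+1 ≤ i → s i < r j) := by
      intro i hi
      constructor
      · intro h
        calc r j ≤ r i := by
              rcases eq_or_lt_of_le (Nat.lt_succ_iff.1 h) with h' | h'
              · rw [h']
              · exact (hr.1 h' hj).le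
          _ < s i := (hint i (by omega)).1
      · intro h
        calc s i ≤ s (j+1) := by
              rcases eq_or_lt_of_le h with h' | h'
              · rw [h']
              · exact (hs.1 h' hi).le
          _ < r j := (hint j hj).2
    have hms : cntf (l+1) s (r j) = j + 1 := by
      apply cntf_eq (by omega) hs.1
      intro i hi
      exact ⟨fun h => (hsstrict i hi).1 h, fun h => not_lt.2 ((hsstrict i hi).2 h).le⟩
    refine ⟨?_, by omega⟩
    apply hs.eval_ne_zero
    intro i hi
    rcases Nat.lt_or_ge i (j+1) with h | h
    · exact ((hsstrict i hi).1 h).ne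
    · exact ((hsstrict i hi).2 h).ne'
  · -- x is a root of ps
    intro hzero
    have hex : ∃ j, j < l+1 ∧ x = s j := by
      by_contra hne
      push_neg at hne
      exact hs.eval_ne_zero (fun j hj => hne j hj) hzero
    obtain ⟨j, hj, rfl⟩ := hex
    have hms : cntf (l+1) s (s j) = j := by
      apply cntf_eq (by omega) hs.1
      intro i hi
      refine ⟨fun h => hs.1 h hj, fun h hc => ?_⟩
      rcases eq_or_lt_of_le h with h' | h'
      · subst h'; exact lt_irrefl _ hc
      · exact absurd hc (not_lt.2 (hs.1 h' hi).le)
    have hrstrict : ∀ i < l, (i < j → s j < r i) ∧ (j ≤ i → r i < s j) := by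
      intro i hi
      constructor
      · intro h
        calc s j ≤ s (i+1) := by
              rcases eq_or_lt_of_le (Nat.succ_le_of_lt h) with h' | h'
              · rw [← h']
              · exact (hs.1 h' hj).le
          _ < r i := (hint i hi).2
      · intro h
        calc r i < s i := (hint i hi).1
          _ ≤ s j := by
              rcases eq_or_lt_of_le h with h' | h'
              · rw [h']
              · exact (hs.1 h' (by omega)).le
    have hmr : cntf l r (s j) = min j l := by
      apply cntf_eq (min_le_right _ _) hr.1
      intro i hi
      constructor
      · intro h
        exact (hrstrict i hi).1 (lt_of_lt_of_le h (min_le_left _ _))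
      · intro h
        have : j ≤ i := by omega
        exact not_lt.2 ((hrstrict i hi).2 this).le
    have hjl : min j l = j := by omega
    refine ⟨?_, by omega⟩
    apply hr.eval_ne_zero
    intro i hi
    rcases Nat.lt_or_ge i j with h | h
    · exact ((hrstrict i hi).1 h).ne
    · exact ((hrstrict i hi).2 h).ne'
  · -- both nonzero
    intro hl hs0
    have hner : ∀ i < l, x ≠ r i := by
      intro i hi he
      exact hl (he ▸ hr.eval_root hi)
    have hnes : ∀ i < l+1, x ≠ s i := by
      intro i hi he
      exact hs0 (he ▸ hs.eval_root hi)
    -- mr ≤ ms ≤ mr + 1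
    have hle1 : cntf l r x ≤ cntf (l+1) s x := by
      by_contra hc
      push_neg at hc
      have hms_lt : cntf (l+1) s x < l := lt_of_lt_of_le hc (cntf_le l r x)
      have h1 : x < r (cntf (l+1) s x) := (count_lt_iff hr.1 x hms_lt).2 hc
      have h2 : r (cntf (l+1) s x) < s (cntf (l+1) s x) := (hint _ hms_lt).1
      have h3 := (count_lt_iff (n := l+1) hs.1 x (by omega)).1 (h1.trans h2)
      omega
    have hle2 : cntf (l+1) s x ≤ cntf l r x + 1 := by
      by_contra hc
      push_neg at hc
      have hlt : cntf l r x + 1 < l + 1 := lt_of_lt_of_le hc (cntf_le (l+1) s x)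
      have h1 : x < s (cntf l r x + 1) := (count_lt_iff hs.1 x hlt).2 hc
      have h2 : s (cntf l r x + 1) < r (cntf l r x) := (hint _ (by omega)).2
      have h3 := (count_lt_iff (n := l) hr.1 x (by omega)).1 (h1.trans h2)
      omega
    have hplpos := hr.eval_pos_iff hner
    have hpspos := hs.eval_pos_iff hnes
    rw [show ((Finset.range l).filter (fun i => x < r i)).card = cntf l r x from rfl] at hplpos
    rw [show ((Finset.range (l+1)).filter (fun i => x < s i)).card = cntf (l+1) s x from rfl]
      at hpspos
    constructor
    · intro hprod
      by_contra hne
      have heq : cntf (l+1) s x = cntf l r x := by omega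
      rw [heq] at hpspos
      rcases lt_or_gt_of_ne hl with h | h
      · have := neg_of_iff hpspos hs0 (fun hev => absurd (hplpos.2 hev) (not_lt.2 h.le))
        nlinarith
      · have := hpspos.2 (hplpos.1 h)
        nlinarith
    · intro hprod
      by_contra hne
      have heq : cntf (l+1) s x = cntf l r x + 1 := by omega
      rw [heq] at hpspos
      have hpar : Even (cntf l r x + 1) ↔ ¬ Even (cntf l r x) := by
        simp [Nat.even_add_one]
      rw [hpar] at hpspos
      rcases lt_or_gt_of_ne hl with h | h
      · have hodd : ¬ Even (cntf l r x) := fun hev => absurd (hplpos.2 hev) (not_lt.2 h.le)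
        have := hpspos.2 hodd
        nlinarith
      · have := neg_of_iff hpspos hs0 (by simpa using hplpos.1 h)
        nlinarith


lemma lam_count (hP : Recurrence α β γ ρ P) {q : ℕ} {η : ℝ} {Λ : ℕ → ℝ}
    (hΛ : SLZeros P q η Λ) {R : ℕ → ℕ → ℝ}
    (hfac : ∀ l, Fac (P l) l (R l))
    (hint : ∀ l, ∀ i < l, R l i < R (l+1) i ∧ R (l+1) (i+1) < R l i)
    {k : ℕ} (hk1 : 1 ≤ k) (hk2 : k ≤ q + 1) :
    cntf q (R q) (Λ (k-1)) = k - 1 ∧ ∀ j < q, Λ (k-1) ≠ R q j := by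
  set pt : ℝ[X] := P (q+1) - C η * P q with hpt
  -- degree and leading coefficient of pt
  have hd1 := (hfac (q+1)).natDegree_eq
  have hlc1 := (hfac (q+1)).leadingCoeff_pos
  have hd0 := (hfac q).natDegree_eq
  have hBd : (C η * P q).natDegree < q + 1 :=
    lt_of_le_of_lt (natDegree_C_mul_le _ _) (by omega)
  have hptd : pt.natDegree = q + 1 := by
    rw [hpt, natDegree_sub_eq_left_of_natDegree_lt (by omega), hd1]
  have hptlc : 0 < pt.leadingCoeff := by
    have hco : pt.coeff (q+1) = (P (q+1)).coeff (q+1) := by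
      rw [hpt, coeff_sub, coeff_eq_zero_of_natDegree_lt hBd, sub_zero]
    have : pt.leadingCoeff = (P (q+1)).leadingCoeff := by
      calc pt.leadingCoeff = pt.coeff (q+1) := by rw [leadingCoeff, hptd]
        _ = (P (q+1)).coeff (q+1) := hco
        _ = (P (q+1)).leadingCoeff := by rw [leadingCoeff, hd1]
    rw [this]; exact hlc1
  have hΛdec : ∀ ⦃i j : ℕ⦄, i < j → j < q+1 → Λ j < Λ i := by
    intro i j hij hj
    exact hΛ.anti (by simp; omega) (by simp; omega) hij
  have hptfac : Fac pt (q+1) Λ :=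
    fac_of_roots hptd hptlc hΛdec (fun i hi => hΛ.root i (by omega))
  -- evaluation of pt at roots of P q
  have hpt_at : ∀ j < q, pt.eval (R q j) = (P (q+1)).eval (R q j) := by
    intro j hj
    rw [hpt, eval_sub, eval_mul, (hfac q).eval_root hj]
    simp
  -- R q j is not a root of P (q+1)
  have hnroot : ∀ j < q, ∀ i < q+1, R q j ≠ R (q+1) i := by
    intro j hj i hi
    rcases Nat.lt_or_ge i (j+1) with h | h
    · refine ne_of_lt ?_
      calc R q j ≤ R q i := by
            rcases eq_or_lt_of_le (Nat.lt_succ_iff.1 h) with h' | h'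
            · rw [h']
            · exact ((hfac q).1 h' hj).le
        _ < R (q+1) i := (hint q i (by omega)).1
    · refine ne_of_gt ?_
      calc R (q+1) i ≤ R (q+1) (j+1) := by
            rcases eq_or_lt_of_le h with h' | h'
            · rw [h']
            · exact ((hfac (q+1)).1 h' hi).le
        _ < R q j := (hint q j hj).2
  have hcnt1 : ∀ j < q, cntf (q+1) (R (q+1)) (R q j) = j + 1 := by
    intro j hj
    apply cntf_eq (by omega) (hfac (q+1)).1
    intro i hi
    constructor
    · intro h
      have h1 : R q j ≤ R q i := by
        rcases eq_or_lt_of_le (Nat.lt_succ_iff.1 h) with h' | h'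
        · rw [h']
        · exact ((hfac q).1 h' hj).le
      have h2 : R q i < R (q+1) i := (hint q i (by omega)).1
      linarith
    · intro h
      have : R (q+1) i ≤ R (q+1) (j+1) := by
        rcases eq_or_lt_of_le h with h' | h'
        · rw [h']
        · exact ((hfac (q+1)).1 h' hi).le
      have h2 := (hint q j hj).2
      exact not_lt.2 (by linarith)
  -- sign of P (q+1) at R q j
  have hsign1 : ∀ j < q, (0 < (P (q+1)).eval (R q j) ↔ Even (j+1)) ∧
      (P (q+1)).eval (R q j) ≠ 0 := by
    intro j hj
    have hne := (hfac (q+1)).eval_ne_zero (fun i hi => hnroot j hj i hi)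
    have hpos := (hfac (q+1)).eval_pos_iff (x := R q j) (fun i hi => hnroot j hj i hi)
    rw [show ((Finset.range (q+1)).filter (fun i => R q j < R (q+1) i)).card
        = cntf (q+1) (R (q+1)) (R q j) from rfl, hcnt1 j hj] at hpos
    exact ⟨hpos, hne⟩
  -- R q j is not a zero of pt
  have hnotlam : ∀ j < q, ∀ i < q + 1, R q j ≠ Λ i := by
    intro j hj i hi he
    have h0 := hptfac.eval_root hi
    rw [← he, hpt_at j hj] at h0
    exact (hsign1 j hj).2 h0
  set M : ℕ → ℕ := fun j => cntf (q+1) Λ (R q j) with hM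
  have hMpar : ∀ j < q, (Even (M j) ↔ Even (j+1)) := by
    intro j hj
    have hpos := hptfac.eval_pos_iff (x := R q j) (fun i hi => hnotlam j hj i hi)
    rw [show ((Finset.range (q+1)).filter (fun i => R q j < Λ i)).card = M j from rfl] at hpos
    rw [hpt_at j hj] at hpos
    rw [← hpos]
    exact (hsign1 j hj).1
  have hMmono : ∀ j, j + 1 < q → M j < M (j+1) := by
    intro j hj
    have hle : M j ≤ M (j+1) := by
      apply Finset.card_le_card
      intro i hi
      rw [Finset.mem_filter] at hi ⊢
      refine ⟨hi.1, lt_trans ?_ hi.2⟩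
      exact (hfac q).1 (Nat.lt_succ_self j) hj
    have hne : M j ≠ M (j+1) := by
      intro he
      have h1 := hMpar j (by omega)
      have h2 := hMpar (j+1) hj
      rw [he] at h1
      have h3 : Even (j+1+1) ↔ ¬ Even (j+1) := Nat.even_add_one
      rw [h3] at h2
      exact iff_not_self (h1.symm.trans h2)
    omega
  have hMlow : ∀ j < q, j + 1 ≤ M j := by
    intro j
    induction j with
    | zero =>
      intro h0
      have := hMpar 0 h0
      rcases Nat.eq_zero_or_pos (M 0) with h | h
      · rw [h] at this
        simp [Nat.even_add_one] at this
      · omega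
    | succ j ih =>
      intro hj
      have := hMmono j hj
      have := ih (by omega)
      omega
  have hMchain : ∀ d j, j + d < q → M j + d ≤ M (j + d) := by
    intro d
    induction d with
    | zero => intro j h; simpa using le_refl (M j)
    | succ d ih =>
      intro j h
      have h1 := ih j (by omega)
      have h2 := hMmono (j+d) (by omega)
      have h3 : j + (d+1) = (j + d) + 1 := by omega
      rw [h3]
      omega
  have hMhigh : ∀ j < q, M j ≤ j + 1 := by
    intro j hj
    by_contra hc
    push_neg at hc
    have hpar := hMpar j hj
    have hj2 : j + 3 ≤ M j := by
      rcases Nat.even_or_odd (j+1) with he | ho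
      · have := hpar.2 he
        rcases this with ⟨a, ha⟩
        rcases he with ⟨b, hb⟩
        omega
      · have h1 : ¬ Even (M j) := fun he => absurd (hpar.1 he) (Nat.not_even_iff_odd.2 ho)
        rcases Nat.not_even_iff_odd.1 h1 with ⟨a, ha⟩
        rcases ho with ⟨b, hb⟩
        omega
    have hchain := hMchain (q-1-j) j (by omega)
    have hjq : j + (q-1-j) = q-1 := by omega
    rw [hjq] at hchain
    have hbound := cntf_le (q+1) Λ (R q (q-1))
    rw [show cntf (q+1) Λ (R q (q-1)) = M (q-1) from rfl] at hbound
    omega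
  have hMeq : ∀ j < q, M j = j + 1 := fun j hj => le_antisymm (hMhigh j hj) (hMlow j hj)
  -- main conclusion
  have hiff : ∀ j < q, ∀ i < q + 1, (R q j < Λ i ↔ i ≤ j) := by
    intro j hj i hi
    have := count_lt_iff hΛdec (R q j) hi
    rw [show cntf (q+1) Λ (R q j) = M j from rfl, hMeq j hj] at this
    rw [this]
    omega
  have hne : ∀ j < q, Λ (k-1) ≠ R q j := fun j hj => (hnotlam j hj (k-1) (by omega)).symm
  refine ⟨?_, hne⟩
  apply cntf_eq (by omega) (hfac q).1
  intro j hj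
  constructor
  · intro h
    have h1 : ¬ (R q j < Λ (k-1)) := by
      rw [hiff j hj (k-1) (by omega)]
      omega
    have h2 := hne j hj
    rcases lt_trichotomy (Λ (k-1)) (R q j) with h' | h' | h'
    · exact h'
    · exact absurd h' h2
    · exact absurd h' h1
  · intro h
    exact not_lt.2 ((hiff j hj (k-1) (by omega)).2 (by omega)).le


open scoped Classical in
noncomputable def Zfin (f : ℕ → ℝ) (l : ℕ) : Finset ℕ :=
  (Finset.range (l+1)).filter (fun ν => f ν = 0 ∨ (1 ≤ ν ∧ f (ν-1) * f ν < 0))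

open scoped Classical in
noncomputable def Cfin (g : ℕ → ℝ) (l : ℕ) : Finset ℕ :=
  (Finset.range (l+1)).filter (fun ν => 1 ≤ ν ∧ g (ν-1) * g ν < 0)

open scoped Classical in
lemma Zfin_succ (f : ℕ → ℝ) (l : ℕ) :
    (Zfin f (l+1)).card =
      (Zfin f l).card + (if f (l+1) = 0 ∨ f l * f (l+1) < 0 then 1 else 0) := by
  unfold Zfin
  rw [Finset.range_add_one (n := l+1), Finset.filter_insert]
  by_cases h : f (l+1) = 0 ∨ (1 ≤ l+1 ∧ f (l+1-1) * f (l+1) < 0)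
  · rw [if_pos h, Finset.card_insert_of_notMem (by simp)]
    have h' : f (l+1) = 0 ∨ f l * f (l+1) < 0 := by
      rcases h with h | h
      · exact Or.inl h
      · right; simpa using h.2
    rw [if_pos h']
  · rw [if_neg h, if_neg (by
      intro hc
      apply h
      rcases hc with hc | hc
      · exact Or.inl hc
      · right; exact ⟨by omega, by simpa using hc⟩), add_zero]

open scoped Classical in
lemma Cfin_succ (g : ℕ → ℝ) (l : ℕ) :
    (Cfin g (l+1)).card =
      (Cfin g l).card + (if g l * g (l+1) < 0 then 1 else 0) := by
  unfold Cfin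
  rw [Finset.range_add_one (n := l+1), Finset.filter_insert]
  by_cases h : 1 ≤ l+1 ∧ g (l+1-1) * g (l+1) < 0
  · rw [if_pos h, Finset.card_insert_of_notMem (by simp), if_pos (by simpa using h.2)]
  · rw [if_neg h, if_neg (fun hc => h ⟨by omega, by simpa using hc⟩), add_zero]

lemma Zfin_zero {f : ℕ → ℝ} (h : f 0 ≠ 0) : (Zfin f 0).card = 0 := by
  unfold Zfin
  rw [Finset.card_eq_zero]
  apply Finset.filter_false_of_mem
  intro ν hν
  simp only [Finset.mem_range] at hν
  interval_cases ν
  push_neg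
  exact ⟨h, by omega⟩

lemma Cfin_zero (g : ℕ → ℝ) : (Cfin g 0).card = 0 := by
  unfold Cfin
  rw [Finset.card_eq_zero]
  apply Finset.filter_false_of_mem
  intro ν hν
  simp only [Finset.mem_range] at hν
  interval_cases ν
  push_neg
  intro h
  omega

lemma indicator_one {a b c : ℝ} (hac : a * c < 0) (hb : b ≠ 0) :
    (if a * b < 0 then (1:ℕ) else 0) + (if b * c < 0 then 1 else 0) = 1 := by
  have ha : a ≠ 0 := by rintro rfl; simp at hac
  have hc : c ≠ 0 := by rintro rfl; simp at hac
  rcases lt_or_gt_of_ne ha with ha' | ha' <;> rcases lt_or_gt_of_ne hb with hb' | hb' <;>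
    rcases lt_or_gt_of_ne hc with hc' | hc'
  all_goals first
    | (exfalso; nlinarith)
    | (rw [if_neg (by nlinarith), if_pos (by nlinarith)])
    | (rw [if_pos (by nlinarith), if_neg (by nlinarith)])

variable {α β γ ρ : ℕ → ℝ} {P : ℕ → Polynomial ℝ}

/-- the Sturm zero-counting lemma -/
lemma sturm_count (hP : Recurrence α β γ ρ P) {R : ℕ → ℕ → ℝ}
    (hfac : ∀ l, Fac (P l) l (R l))
    (hint : ∀ l, ∀ i < l, R l i < R (l+1) i ∧ R (l+1) (i+1) < R l i) (x : ℝ) :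
    ∀ l, (Zfin (fun ν => (P ν).eval x) l).card =
      cntf l (R l) x + (if (P l).eval x = 0 then 1 else 0) := by
  intro l
  induction l with
  | zero =>
    have hf0 : (P 0).eval x = 1 := by rw [hP.hP0]; simp
    rw [Zfin_zero (by rw [hf0]; norm_num)]
    have : cntf 0 (R 0) x = 0 := by simp [cntf]
    rw [this, if_neg (by rw [hf0]; norm_num)]
  | succ l ih =>
    have pf := pair_facts (hfac l) (hfac (l+1)) (hint l) x
    rw [Zfin_succ]
    by_cases h1 : (P (l+1)).eval x = 0
    · obtain ⟨hne0, hcnt⟩ := pf.2.1 h1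
      simp [ih, hcnt, h1, hne0]
    · by_cases h2 : (P l).eval x = 0
      · obtain ⟨hne1, hcnt⟩ := pf.1 h2
        simp [ih, hcnt, h1, h2]
      · obtain ⟨ha, hb⟩ := pf.2.2 h2 h1
        by_cases h3 : (P l).eval x * (P (l+1)).eval x < 0
        · simp [ih, ha h3, h1, h2, h3]
        · simp [ih, hb h3, h1, h2, h3]

/-- sign changes of any admissible replacement equal the zero count -/
lemma adm_count (hP : Recurrence α β γ ρ P) {R : ℕ → ℕ → ℝ}
    (hfac : ∀ l, Fac (P l) l (R l))
    (hint : ∀ l, ∀ i < l, R l i < R (l+1) i ∧ R (l+1) (i+1) < R l i)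
    (x : ℝ) (q : ℕ) (hfq : (P q).eval x ≠ 0)
    {g : ℕ → ℝ} (hg1 : ∀ ν ≤ q, g ν ≠ 0)
    (hg2 : ∀ ν ≤ q, (P ν).eval x ≠ 0 → g ν = (P ν).eval x) :
    (Cfin g q).card = (Zfin (fun ν => (P ν).eval x) q).card := by
  classical
  set f : ℕ → ℝ := fun ν => (P ν).eval x with hf
  have hf0 : f 0 = 1 := by simp [hf, hP.hP0]
  have key : ∀ l, l ≤ q → f l ≠ 0 → (Cfin g l).card = (Zfin f l).card := by
    intro l
    induction l using Nat.strong_induction_on with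
    | _ l ih =>
      match l with
      | 0 =>
        intro _ _
        rw [Cfin_zero, Zfin_zero (by rw [hf0]; norm_num)]
      | Nat.succ l =>
        intro hlq hfl1
        rw [Cfin_succ, Zfin_succ]
        by_cases h2 : f l = 0
        · have hl1 : 1 ≤ l := by
            by_contra h
            push_neg at h
            interval_cases l
            rw [hf0] at h2
            norm_num at h2
          obtain ⟨m, rfl⟩ : ∃ m, l = m + 1 := ⟨l - 1, by omega⟩
          have pfm := pair_facts (hfac m) (hfac (m+1)) (hint m) x
          have hfm : f m ≠ 0 := (pfm.2.1 h2).1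
          have hrec := rec_eval hP m x
          have h2' : (P (m+1)).eval x = 0 := h2
          rw [h2'] at hrec
          have hβ := hP.hβ (m+1)
          have hγ := hP.hγ m
          have hkey : γ m * f m + β (m+1) * f (m+2) = 0 := by
            simp only [mul_zero, add_zero] at hrec
            linarith [hrec]
          have hprod : f m * f (m+2) < 0 := by
            have hx2 : γ m * (f m * f m) + β (m+1) * (f (m+2) * f m) = 0 := by
              linear_combination f m * hkey
            nlinarith [mul_pos hγ (mul_self_pos.2 hfm), hβ]
          -- rewrite both sides down to level m
          rw [Cfin_succ, Zfin_succ, ih m (by omega) (by omega) hfm]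
          have hnorm : m + 1 + 1 = m + 2 := by omega
          rw [hnorm]
          have hgm : g m = f m := hg2 m (by omega) hfm
          have hgm2 : g (m+2) = f (m+2) := hg2 (m+2) (by omega) hfl1
          have hgm1 : g (m+1) ≠ 0 := hg1 (m+1) (by omega)
          have hind : (if g m * g (m+1) < 0 then (1:ℕ) else 0) +
              (if g (m+1) * g (m+2) < 0 then 1 else 0) = 1 := by
            apply indicator_one _ hgm1
            rw [hgm, hgm2]
            exact hprod
          have hz1 : (if f (m+1) = 0 ∨ f m * f (m+1) < 0 then (1:ℕ) else 0) = 1 :=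
            if_pos (Or.inl h2)
          have hz2 : (if f (m+2) = 0 ∨ f (m+1) * f (m+2) < 0 then (1:ℕ) else 0) = 0 := by
            apply if_neg
            push_neg
            refine ⟨hfl1, ?_⟩
            simp [h2]
          rw [hz1, hz2]
          omega
        · have ihl := ih l (Nat.lt_succ_self l) (by omega) h2
          have hgl : g l = f l := hg2 l (by omega) h2
          have hgl1 : g (l+1) = f (l+1) := hg2 (l+1) hlq hfl1
          rw [ihl, hgl, hgl1]
          congr 1
          by_cases h3 : f l * f (l+1) < 0
          · rw [if_pos h3, if_pos (Or.inr h3)]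
          · rw [if_neg h3, if_neg (by push_neg; exact ⟨hfl1, not_lt.1 h3⟩)]
  exact key q le_rfl hfq

end Development

/-- for the eigenfunctions `ψ_k(ν) = P_ν(λ_k)` of the discrete
Sturm–Liouville problem (`k = 1,…,q+1`, `ν ∈ [0,q]_ℤ`),
`S⁻(ψ_k) = S⁺(ψ_k) = N(ψ_k) = k - 1`. -/
theorem stmt_8 (α β γ ρ : ℕ → ℝ) (P : ℕ → Polynomial ℝ)
    (hP : Recurrence α β γ ρ P)
    (q : ℕ) (η : ℝ) (Λ : ℕ → ℝ) (hΛ : SLZeros P q η Λ) :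
    ∀ k, 1 ≤ k → k ≤ q + 1 →
      Sminus q (fun ν => (P ν).eval (Λ (k - 1))) = k - 1 ∧
      Splus q (fun ν => (P ν).eval (Λ (k - 1))) = k - 1 ∧
      N q (fun ν => (P ν).eval (Λ (k - 1))) = k - 1 := by
  classical
  intro k hk1 hk2
  obtain ⟨R, hR⟩ := chain_exists hP
  have hfac : ∀ l, Fac (P l) l (R l) := fun l => (hR l).1
  have hintl : ∀ l, ∀ i < l, R l i < R (l+1) i ∧ R (l+1) (i+1) < R l i := fun l => (hR l).2
  obtain ⟨hcq, hneq⟩ := lam_count hP hΛ hfac hintl hk1 hk2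
  set x : ℝ := Λ (k-1) with hxdef
  set f : ℕ → ℝ := fun ν => (P ν).eval x with hfdef
  have hfq : f q ≠ 0 := (hfac q).eval_ne_zero (fun j hj => hneq j hj)
  have hZq : (Zfin f q).card = k - 1 := by
    have hZ := sturm_count hP hfac hintl x q
    rw [hfdef]
    rw [hZ, if_neg hfq, hcq]
    omega
  have hNset : {ν : ℕ | IsZero q f ν} = ↑(Zfin f q) := by
    ext ν
    simp only [Set.mem_setOf_eq, Finset.coe_filter, Zfin, Finset.mem_coe, Finset.mem_filter,
      Finset.mem_range, IsZero]
    constructor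
    · rintro (⟨h1, h2⟩ | ⟨h1, h2, h3⟩)
      · exact ⟨by omega, Or.inl h2⟩
      · exact ⟨by omega, Or.inr ⟨h1, h3⟩⟩
    · rintro ⟨h1, h2 | ⟨h2, h3⟩⟩
      · exact Or.inl ⟨by omega, h2⟩
      · exact Or.inr ⟨h2, by omega, h3⟩
  have hN : N q f = k - 1 := by
    rw [N, hNset, Set.ncard_coe_finset, hZq]
  have hsc : ∀ g, Admissible q f g → signChanges q g = k - 1 := by
    intro g hg
    have hadm := adm_count hP hfac hintl x q hfq hg.1 hg.2
    have hCset : {ν : ℕ | 1 ≤ ν ∧ ν ≤ q ∧ g (ν-1) * g ν < 0} = ↑(Cfin g q) := by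
      ext ν
      simp only [Set.mem_setOf_eq, Cfin, Finset.mem_coe, Finset.mem_filter, Finset.mem_range]
      constructor
      · rintro ⟨h1, h2, h3⟩
        exact ⟨by omega, h1, h3⟩
      · rintro ⟨h1, h2, h3⟩
        exact ⟨h2, by omega, h3⟩
    rw [signChanges, hCset, Set.ncard_coe_finset, hadm, ← hfdef, hZq]
  have hEset : {s | ∃ g, Admissible q f g ∧ signChanges q g = s} = {k - 1} := by
    ext s
    simp only [Set.mem_setOf_eq, Set.mem_singleton_iff]
    constructor
    · rintro ⟨g, hg, rfl⟩
      exact hsc g hg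
    · rintro rfl
      refine ⟨fun ν => if f ν = 0 then 1 else f ν, ⟨?_, ?_⟩, ?_⟩
      · intro ν _
        by_cases h : f ν = 0 <;> simp [h]
      · intro ν _ h
        simp [h]
      · exact hsc _ ⟨fun ν _ => by by_cases h : f ν = 0 <;> simp [h],
          fun ν _ h => by simp [h]⟩
  refine ⟨?_, ?_, hN⟩
  · rw [Sminus, hEset, csInf_singleton]
  · rw [Splus, hEset, csSup_singleton]

end DiscPaper
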